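/- Let G be a finite simple graph and k ≥ 2 an integer. Let (G',w') be the ASHG in which every edge has weight 1, obtained from G by attaching to every vertex v ∈ V(G) a set P_v of k−2 new pendant vertices, each adjacent only to v. Let 𝒫 = {P_v ∪ {v} : v ∈ V(G)}. Then there exists a blocking coalition of size at most k for 𝒫 if and only if G contains a clique of size k. -/

import Mathlib

open Finset

noncomputable section
open scoped Classical

variable {V : Type*}

/-- The utility of agent `u` in the coalition `X`: the sum of the weights of the
edges joining `u` to members of `X`. -/
def ut (G : SimpleGraph V) (w : V → V → ℚ) (X : Finset V) (u : V) : ℚ :=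
  ∑ v ∈ X.filter (fun v => G.Adj u v), w u v

/-- `P` encodes a partition of the vertex set: `P u` is the part containing `u`. -/
def IsPartitionFun (P : V → Finset V) : Prop :=
  (∀ u, u ∈ P u) ∧ ∀ u v, v ∈ P u → P v = P u

/-- `X` is a blocking coalition for the partition `P`. -/
def Blocking (G : SimpleGraph V) (w : V → V → ℚ) (P : V → Finset V)
    (X : Finset V) : Prop :=
  X.Nonempty ∧ ∀ u ∈ X, ut G w (P u) u < ut G w X u

/-- The partition `P` is core stable: it admits no blocking coalition. -/
def CoreStable (G : SimpleGraph V) (w : V → V → ℚ) (P : V → Finset V) : Prop :=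
  ∀ X : Finset V, ¬ Blocking G w P X

/-- The partition `P` is `k`-core stable: it admits no blocking coalition of size at most `k`. -/
def KCoreStable (k : ℕ) (G : SimpleGraph V) (w : V → V → ℚ) (P : V → Finset V) : Prop :=
  ∀ X : Finset V, X.card ≤ k → ¬ Blocking G w P X

/-- The weight function of the clique gadget: every edge of `G` and every pendant edge
has weight `1` (`0` on non-edges).  `Sum.inr (v, i)` are the `k - 2` pendants of `v`. -/
def w12 {V : Type*} (G : SimpleGraph V) (k : ℕ) :
    (V ⊕ V × Fin (k - 2)) → (V ⊕ V × Fin (k - 2)) → ℚ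
  | Sum.inl a, Sum.inl b => if G.Adj a b then 1 else 0
  | Sum.inl a, Sum.inr p => if a = p.1 then 1 else 0
  | Sum.inr p, Sum.inl a => if a = p.1 then 1 else 0
  | Sum.inr _, Sum.inr _ => 0

/-- The partition `{P_v ∪ {v} : v ∈ V(G)}`. -/
def P12 {V : Type*} [Fintype V] (k : ℕ) :
    (V ⊕ V × Fin (k - 2)) → Finset (V ⊕ V × Fin (k - 2))
  | Sum.inl v => insert (Sum.inl v) (univ.image fun i : Fin (k - 2) => Sum.inr (v, i))
  | Sum.inr p => insert (Sum.inl p.1) (univ.image fun i : Fin (k - 2) => Sum.inr (p.1, i))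

section helpers

variable [Fintype V] (G : SimpleGraph V) (k : ℕ)

local notation "R" => SimpleGraph.fromRel fun u v => w12 G k u v ≠ 0

lemma hadj_ll (a b : V) : (R).Adj (Sum.inl a) (Sum.inl b) ↔ G.Adj a b := by
  rw [SimpleGraph.fromRel_adj]
  simp only [w12]
  constructor
  · rintro ⟨h, h1 | h1⟩
    · by_contra hc; simp [hc] at h1
    · by_contra hc; rw [if_neg (fun h' : G.Adj b a => hc h'.symm)] at h1; exact h1 rfl
  · intro h
    exact ⟨by simpa using G.ne_of_adj h, Or.inl (by simp [h])⟩

lemma hadj_lr (a : V) (p : V × Fin (k - 2)) :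
    (R).Adj (Sum.inl a) (Sum.inr p) ↔ a = p.1 := by
  rw [SimpleGraph.fromRel_adj]
  simp only [w12]
  constructor
  · rintro ⟨h, h1 | h1⟩ <;> (by_contra hc; simp [hc] at h1)
  · intro h; exact ⟨by simp, Or.inl (by simp [h])⟩

lemma hadj_rl (a : V) (p : V × Fin (k - 2)) :
    (R).Adj (Sum.inr p) (Sum.inl a) ↔ a = p.1 := by
  rw [SimpleGraph.adj_comm]; exact hadj_lr G k a p

lemma hadj_rr (p q : V × Fin (k - 2)) : ¬ (R).Adj (Sum.inr p) (Sum.inr q) := by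
  rw [SimpleGraph.fromRel_adj]
  simp [w12]

lemma ut_part_inl (v : V) :
    ut (R) (w12 G k) (P12 k (Sum.inl v)) (Sum.inl v) = ((k - 2 : ℕ) : ℚ) := by
  unfold ut
  have hfil : (P12 (V := V) k (Sum.inl v)).filter (fun x => (R).Adj (Sum.inl v) x)
      = univ.image fun i : Fin (k - 2) => Sum.inr (v, i) := by
    show (insert (Sum.inl v) (univ.image fun i : Fin (k - 2) => Sum.inr (v, i))).filter _ = _
    rw [filter_insert, if_neg (by simp)]
    rw [filter_true_of_mem]
    intro x hx
    obtain ⟨i, _, rfl⟩ := mem_image.1 hx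
    exact (hadj_lr G k v (v, i)).2 rfl
  rw [filter_congr_decidable, hfil, sum_image (by intro a _ b _ h; simpa using h)]
  simp [w12]

lemma ut_part_inr (p : V × Fin (k - 2)) :
    ut (R) (w12 G k) (P12 k (Sum.inr p)) (Sum.inr p) = 1 := by
  unfold ut
  have hfil : (P12 (V := V) k (Sum.inr p)).filter (fun x => (R).Adj (Sum.inr p) x)
      = {Sum.inl p.1} := by
    show (insert (Sum.inl p.1) (univ.image fun i : Fin (k - 2) => Sum.inr (p.1, i))).filter _ = _
    rw [filter_insert, if_pos ((hadj_rl G k p.1 p).2 rfl)]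
    rw [filter_false_of_mem, LawfulSingleton.insert_empty_eq]
    intro x hx
    obtain ⟨i, _, rfl⟩ := mem_image.1 hx
    exact hadj_rr G k p (p.1, i)
  rw [filter_congr_decidable, hfil, sum_singleton]
  simp [w12]


lemma ut_eq_card (X : Finset (V ⊕ V × Fin (k - 2)))
    (hX : ∀ x ∈ X, ∃ a, x = Sum.inl a) (u : V) :
    ut (R) (w12 G k) X (Sum.inl u)
      = ((X.filter fun x => (R).Adj (Sum.inl u) x).card : ℚ) := by
  unfold ut
  rw [filter_congr_decidable]
  rw [Finset.sum_congr rfl (fun x hx => ?_), Finset.sum_const, nsmul_eq_mul, mul_one]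
  obtain ⟨hxX, hadj⟩ := mem_filter.1 hx
  obtain ⟨a, rfl⟩ := hX x hxX
  have : G.Adj u a := (hadj_ll G k u a).1 hadj
  simp [w12, this]

end helpers

/-- the pendant gadget admits a blocking coalition of size at most `k`
iff `G` contains a clique of size `k`. -/
theorem pendant_gadget_blocking_iff_clique (V : Type*) [Fintype V]
    (G : SimpleGraph V) (k : ℕ) (hk : 2 ≤ k) :
    (∃ X : Finset (V ⊕ V × Fin (k - 2)),
        Blocking (SimpleGraph.fromRel fun u v => w12 G k u v ≠ 0)
          (w12 G k) (P12 k) X ∧ X.card ≤ k)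
      ↔ ∃ C : Finset V, C.card = k ∧ ∀ a ∈ C, ∀ b ∈ C, a ≠ b → G.Adj a b := by
  set R := SimpleGraph.fromRel fun u v => w12 G k u v ≠ 0 with hR
  constructor
  · rintro ⟨X, ⟨hne, hblk⟩, hcard⟩
    -- no pendant is in X
    have hnop : ∀ x ∈ X, ∃ a, x = Sum.inl a := by
      rintro x hx
      rcases x with a | p
      · exact ⟨a, rfl⟩
      · exfalso
        have h1 := hblk _ hx
        rw [ut_part_inr] at h1
        have hsub : X.filter (fun x => R.Adj (Sum.inr p) x) ⊆ {Sum.inl p.1} := by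
          intro y hy
          obtain ⟨-, hadj⟩ := mem_filter.1 hy
          rcases y with a | q
          · simp [(hadj_rl G k a p).1 hadj]
          · exact absurd hadj (hadj_rr G k p q)
        have hle : ut R (w12 G k) X (Sum.inr p) ≤ 1 := by
          rcases Finset.subset_singleton_iff.1 hsub with h | h
          · rw [ut, filter_congr_decidable, h]; norm_num
          · rw [ut, filter_congr_decidable, h, sum_singleton]; simp [w12]
        linarith
    -- X is the image of C
    set C : Finset V := univ.filter (fun a => Sum.inl a ∈ X) with hC
    have hXC : X = C.image Sum.inl := by
      ext x
      rcases x with a | p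
      · simp [hC]
      · simp only [mem_image]
        constructor
        · intro hx; obtain ⟨a, h⟩ := hnop _ hx; exact absurd h (by simp)
        · rintro ⟨a, -, h⟩; exact absurd h (by simp)
    obtain ⟨x0, hx0⟩ := hne
    obtain ⟨u0, rfl⟩ := hnop _ hx0
    -- key fact, for every u with inl u ∈ X
    have key : ∀ u : V, Sum.inl u ∈ X →
        X.filter (fun x => R.Adj (Sum.inl u) x) = X.erase (Sum.inl u) ∧ X.card = k := by
      intro u hu
      have h1 := hblk _ hu
      rw [ut_part_inl, ut_eq_card G k X hnop] at h1
      have h2 : k - 2 < (X.filter (fun x => R.Adj (Sum.inl u) x)).card := by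
        exact_mod_cast h1
      have hsub : X.filter (fun x => R.Adj (Sum.inl u) x) ⊆ X.erase (Sum.inl u) := by
        intro y hy
        obtain ⟨hyX, hadj⟩ := mem_filter.1 hy
        exact mem_erase.2 ⟨fun h => by rw [h] at hadj; exact R.irrefl hadj, hyX⟩
      have h3 : (X.filter (fun x => R.Adj (Sum.inl u) x)).card ≤ X.card - 1 := by
        have := card_le_card hsub
        rwa [card_erase_of_mem hu] at this
      have hX1 : 1 ≤ X.card := card_pos.2 ⟨_, hu⟩
      have hXk : X.card = k := by omega
      have hcf : (X.filter (fun x => R.Adj (Sum.inl u) x)).card = k - 1 := by omega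
      refine ⟨eq_of_subset_of_card_le hsub ?_, hXk⟩
      rw [card_erase_of_mem hu, hcf, hXk]
    refine ⟨C, ?_, ?_⟩
    · have : (C.image (Sum.inl : V → V ⊕ V × Fin (k - 2))).card = C.card :=
        card_image_of_injective _ Sum.inl_injective
      rw [← hXC] at this
      rw [← this, (key u0 hx0).2]
    · intro a ha b hb hab
      have haX : Sum.inl a ∈ X := (mem_filter.1 ha).2
      have hbX : Sum.inl b ∈ X := (mem_filter.1 hb).2
      have := (key a haX).1
      have hbm : Sum.inl b ∈ X.filter (fun x => R.Adj (Sum.inl a) x) := by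
        rw [this]; exact mem_erase.2 ⟨by simpa using hab.symm, hbX⟩
      exact (hadj_ll G k a b).1 (mem_filter.1 hbm).2
  · rintro ⟨C, hCk, hclique⟩
    refine ⟨C.image Sum.inl, ⟨⟨Sum.inl (C.nonempty_of_ne_empty (by
        intro h; rw [h] at hCk; simp at hCk; omega)).choose, mem_image_of_mem _
        (C.nonempty_of_ne_empty (by intro h; rw [h] at hCk; simp at hCk; omega)).choose_spec⟩,
      ?_⟩, by rw [card_image_of_injective _ Sum.inl_injective, hCk]⟩
    intro x hx
    obtain ⟨u, hu, rfl⟩ := mem_image.1 hx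
    have hnop : ∀ y ∈ C.image (Sum.inl : V → V ⊕ V × Fin (k - 2)), ∃ a, y = Sum.inl a := by
      intro y hy; obtain ⟨a, -, rfl⟩ := mem_image.1 hy; exact ⟨a, rfl⟩
    rw [ut_part_inl, ut_eq_card G k _ hnop]
    have hfil : (C.image Sum.inl).filter (fun x => R.Adj (Sum.inl u) x)
        = (C.image Sum.inl).erase (Sum.inl u) := by
      ext y
      simp only [mem_filter, mem_erase]
      constructor
      · rintro ⟨hy, hadj⟩
        exact ⟨fun h => by rw [h] at hadj; exact R.irrefl hadj, hy⟩
      · rintro ⟨hne, hy⟩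
        obtain ⟨b, hb, rfl⟩ := mem_image.1 hy
        refine ⟨hy, (hadj_ll G k u b).2 (hclique u hu b hb fun h => hne (by rw [h]))⟩
    rw [hfil, card_erase_of_mem hx, card_image_of_injective _ Sum.inl_injective, hCk]
    have : ((k - 2 : ℕ) : ℚ) < ((k - 1 : ℕ) : ℚ) := by
      exact_mod_cast Nat.sub_lt_sub_left (by omega) (by omega)
    exact this
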